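/- Let R be a root system in Euclidean space V and define the endomorphism F₀ of V by F₀(v) = Σ_{α ∈ R} ⟨v, α⟩ α∨ (sum over all roots, where ⟨v,α⟩ = 2(v,α)/(α,α) is extended linearly and α∨ denotes the coroot identified with a vector via the inner product). Then for every coroot β∨, F₀(β) is a strictly positive multiple of β∨; in particular F₀ is nondegenerate on the span of R. -/

import Mathlib

open RealInnerProductSpace

/-- The coroot `α∨ = 2α/(α,α)` of a vector `α` in a real inner product space. -/
noncomputable def coroot {V : Type*} [NormedAddCommGroup V] [InnerProductSpace ℝ V] (v : V) :
    V :=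
  (2 / ⟪v, v⟫) • v

/-- The reflection in the hyperplane orthogonal to `α`. -/
noncomputable def reflFun {V : Type*} [NormedAddCommGroup V] [InnerProductSpace ℝ V]
    (α v : V) : V :=
  v - (2 * ⟪v, α⟫ / ⟪α, α⟫) • α

section Helpers

variable {V : Type*} [NormedAddCommGroup V] [InnerProductSpace ℝ V]

lemma inner_self_ne (β : V) (hβ : β ≠ 0) : ⟪β, β⟫ ≠ 0 := by
  simpa using hβ

lemma refl_inner (β : V) (hβ : β ≠ 0) (x y : V) :
    ⟪reflFun β x, reflFun β y⟫ = ⟪x, y⟫ := by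
  have h := inner_self_ne β hβ
  simp only [reflFun, inner_sub_left, inner_sub_right, real_inner_smul_left,
    real_inner_smul_right]
  rw [real_inner_comm β x, real_inner_comm β y]
  field_simp
  ring

lemma refl_invol (β : V) (hβ : β ≠ 0) (x : V) :
    reflFun β (reflFun β x) = x := by
  have h := inner_self_ne β hβ
  simp only [reflFun, inner_sub_left, real_inner_smul_left]
  have e : 2 * (⟪x,β⟫ - 2 * ⟪x,β⟫ / ⟪β,β⟫ * ⟪β,β⟫) / ⟪β,β⟫ = -(2 * ⟪x,β⟫ / ⟪β,β⟫) := by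
    field_simp; ring
  rw [e, neg_smul, sub_neg_eq_add]
  abel

lemma refl_self (β : V) (hβ : β ≠ 0) : reflFun β β = -β := by
  have h := inner_self_ne β hβ
  simp only [reflFun]
  rw [mul_div_assoc, div_self h, mul_one, two_smul ℝ β]
  abel

lemma refl_symm (β : V) (x y : V) : ⟪reflFun β x, y⟫ = ⟪x, reflFun β y⟫ := by
  simp only [reflFun, inner_sub_left, inner_sub_right, real_inner_smul_left,
    real_inner_smul_right]
  rw [real_inner_comm y β]
  ring

lemma refl_add (β x y : V) : reflFun β (x + y) = reflFun β x + reflFun β y := by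
  simp only [reflFun, inner_add_left]
  rw [show 2 * (⟪x,β⟫ + ⟪y,β⟫) / ⟪β,β⟫ = 2*⟪x,β⟫/⟪β,β⟫ + 2*⟪y,β⟫/⟪β,β⟫ by ring, add_smul]
  abel

lemma refl_smul (β : V) (c : ℝ) (x : V) : reflFun β (c • x) = c • reflFun β x := by
  simp only [reflFun, real_inner_smul_left, smul_sub, smul_smul]
  ring_nf

lemma refl_coroot (β : V) (hβ : β ≠ 0) (α : V) :
    reflFun β (coroot α) = coroot (reflFun β α) := by
  rw [coroot, coroot, refl_inner β hβ, refl_smul]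
noncomputable def reflLM (β : V) : V →ₗ[ℝ] V where
  toFun := reflFun β
  map_add' := refl_add β
  map_smul' := refl_smul β

lemma inner_F0 (R : Finset V) (v : V) :
    ⟪∑ α ∈ R, (2 * ⟪v, α⟫ / ⟪α, α⟫) • coroot α, v⟫
      = ∑ α ∈ R, 4 * ⟪v, α⟫ ^ 2 / ⟪α, α⟫ ^ 2 := by
  rw [sum_inner]
  refine Finset.sum_congr rfl fun α _ => ?_
  rw [real_inner_smul_left, coroot, real_inner_smul_left, real_inner_comm α v]
  ring

end Helpers

/-- For a reduced crystallographic root system `R`, the endomorphism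
`F₀(v) = Σ_{α ∈ R} ⟨v, α⟩ α∨` sends every root `β` to a strictly positive multiple of the
coroot `β∨`; in particular `F₀` is nondegenerate on the span of `R`. -/
theorem F0_root_eq_pos_smul_coroot
    {V : Type*} [NormedAddCommGroup V] [InnerProductSpace ℝ V]
    (R : Finset V) (hne : ∀ α ∈ R, α ≠ 0)
    (hcrys : ∀ α ∈ R, ∀ β ∈ R, ∃ n : ℤ, 2 * ⟪α, β⟫ / ⟪β, β⟫ = (n : ℝ))
    (hred : ∀ α ∈ R, ∀ c : ℝ, c • α ∈ R → c = 1 ∨ c = -1)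
    (hrefl : ∀ α ∈ R, ∀ β ∈ R, reflFun α β ∈ R) :
    (∀ β ∈ R, ∃ c : ℝ, 0 < c ∧
        ∑ α ∈ R, (2 * ⟪β, α⟫ / ⟪α, α⟫) • coroot α = c • coroot β) ∧
      ∀ v ∈ Submodule.span ℝ (R : Set V),
        (∑ α ∈ R, (2 * ⟪v, α⟫ / ⟪α, α⟫) • coroot α) = 0 → v = 0 := by
  constructor
  · intro β hβ
    have hβ0 : β ≠ 0 := hne β hβ
    have hββ : ⟪β, β⟫ ≠ 0 := inner_self_ne β hβ0
    have hββpos : (0:ℝ) < ⟪β, β⟫ := lt_of_le_of_ne real_inner_self_nonneg (Ne.symm hββ)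
    set T : V := ∑ α ∈ R, (2 * ⟪β, α⟫ / ⟪α, α⟫) • coroot α with hT
    -- reflection sends T to -T
    have hsT : reflFun β T = -T := by
      have h1 : reflFun β T = ∑ α ∈ R, (2 * ⟪β, α⟫ / ⟪α, α⟫) • coroot (reflFun β α) := by
        rw [hT, show ∀ x : V, reflFun β x = reflLM β x from fun _ => rfl, map_sum]
        refine Finset.sum_congr rfl fun α hα => ?_
        rw [map_smul]
        simp only [reflLM, LinearMap.coe_mk, AddHom.coe_mk]
        rw [refl_coroot β hβ0 α]
      have h2 : ∀ α ∈ R, (2 * ⟪β, α⟫ / ⟪α, α⟫) • coroot (reflFun β α)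
          = -((2 * ⟪β, reflFun β α⟫ / ⟪reflFun β α, reflFun β α⟫) • coroot (reflFun β α)) := by
        intro α hα
        have e1 : ⟪β, reflFun β α⟫ = -⟪β, α⟫ := by
          rw [← refl_symm β β α, refl_self β hβ0, inner_neg_left]
        have e2 : ⟪reflFun β α, reflFun β α⟫ = ⟪α, α⟫ := refl_inner β hβ0 α α
        rw [e1, e2, ← neg_smul]
        ring_nf
      rw [h1, Finset.sum_congr rfl h2, Finset.sum_neg_distrib, neg_inj]
      rw [hT]
      refine Finset.sum_nbij' (fun α => reflFun β α) (fun α => reflFun β α)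
        (fun α hα => hrefl β hβ α hα) (fun α hα => hrefl β hβ α hα)
        (fun α _ => refl_invol β hβ0 α) (fun α _ => refl_invol β hβ0 α)
        (fun α hα => rfl)
    -- hence T is a multiple of β
    have hTmul : T = (⟪T, β⟫ / ⟪β, β⟫) • β := by
      have := hsT
      rw [reflFun] at this
      have h2T : (2:ℝ) • T = (2 * ⟪T, β⟫ / ⟪β, β⟫) • β := by
        have := congrArg (fun x => x + T) this
        rw [two_smul]
        linear_combination (norm := module) this
      have := congrArg (fun x => (2:ℝ)⁻¹ • x) h2T
      simpa [smul_smul, show (2:ℝ)⁻¹ * 2 = 1 by norm_num,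
        show ∀ a b : ℝ, (2:ℝ)⁻¹ * (2 * a / b) = a / b by intro a b; ring] using this
    -- positivity of ⟪T, β⟫
    have hTβ : (4:ℝ) ≤ ⟪T, β⟫ := by
      rw [hT, inner_F0]
      have hterm : 4 * ⟪β, β⟫ ^ 2 / ⟪β, β⟫ ^ 2 = 4 := by
        field_simp
      calc (4:ℝ) = 4 * ⟪β, β⟫ ^ 2 / ⟪β, β⟫ ^ 2 := hterm.symm
        _ ≤ ∑ α ∈ R, 4 * ⟪β, α⟫ ^ 2 / ⟪α, α⟫ ^ 2 :=
          Finset.single_le_sum (f := fun α => 4 * ⟪β, α⟫ ^ 2 / ⟪α, α⟫ ^ 2)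
            (fun α _ => by positivity) hβ
    refine ⟨⟪T, β⟫ / ⟪β, β⟫ * ⟪β, β⟫ / 2, ?_, ?_⟩
    · have h4 : (0:ℝ) < ⟪T, β⟫ := lt_of_lt_of_le (by norm_num) hTβ
      positivity
    · rw [coroot, smul_smul,
        show ⟪T, β⟫ / ⟪β, β⟫ * ⟪β, β⟫ / 2 * (2 / ⟪β, β⟫) = ⟪T, β⟫ / ⟪β, β⟫ by
          field_simp]
      exact hTmul
  · intro v hv h0
    have h1 : ∑ α ∈ R, 4 * ⟪v, α⟫ ^ 2 / ⟪α, α⟫ ^ 2 = 0 := by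
      rw [← inner_F0 R v, h0, inner_zero_left]
    have h2 : ∀ α ∈ R, ⟪v, α⟫ = 0 := by
      intro α hα
      have hαα : ⟪α, α⟫ ≠ 0 := inner_self_ne α (hne α hα)
      have := (Finset.sum_eq_zero_iff_of_nonneg (fun α _ => by positivity)).mp h1 α hα
      have h3 : ⟪v, α⟫ ^ 2 = 0 := by
        field_simp at this
        linarith
      exact pow_eq_zero_iff two_ne_zero |>.mp h3
    have h4 : ⟪v, v⟫ = 0 := by
      have : ∀ x ∈ Submodule.span ℝ (R : Set V), ⟪v, x⟫ = 0 := by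
        intro x hx
        induction hx using Submodule.span_induction with
        | mem x hx => exact h2 x hx
        | zero => exact inner_zero_right v
        | add x y _ _ hx hy => rw [inner_add_right, hx, hy, add_zero]
        | smul c x _ hx => rw [real_inner_smul_right, hx, mul_zero]
      exact this v hv
    exact inner_self_eq_zero.mp h4
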